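/- The map χ_N sending E_{μ+Nr} ↦ (-1)^{(μ₁+1)r₂ + (μ₂+1)r₁ + Nr₁r₂} L_μ (for 0 ≤ μ₁,μ₂ ≤ N-1, μ ≠ (0,0)) and E_{Nr} ↦ 0 extends linearly to a Lie algebra homomorphism from span{E_m : m ∈ ℤ×ℤ} with the bracket {E_m, E_n} = (N/π) sin((π/N)(m×n)) E_{m+n} onto sl(N,ℂ). -/

import Mathlib

open Matrix Complex

/-- The clock matrix `S = √ω · diag(1, ω, ω², …, ω^{N-1})` with `ω = exp(2πi/N)`,
`√ω = exp(πi/N)`. -/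
noncomputable def clockS (N : ℕ) : Matrix (Fin N) (Fin N) ℂ :=
  Matrix.diagonal fun k =>
    Complex.exp (Real.pi * Complex.I / N) * Complex.exp (2 * Real.pi * Complex.I / N) ^ (k : ℕ)

/-- The shift matrix `T` with `T_{j,j+1} = 1` (j = 1,…,N-1), `T_{N,1} = -1`,
all other entries zero. -/
def shiftT (N : ℕ) : Matrix (Fin N) (Fin N) ℂ :=
  Matrix.of fun j k =>
    if (j : ℕ) + 1 = (k : ℕ) then 1
    else if (j : ℕ) = N - 1 ∧ (k : ℕ) = 0 then -1 else 0

/-- Integer power of a square matrix (negative exponents via the nonsingular inverse). -/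
noncomputable def mzpow {N : ℕ} (A : Matrix (Fin N) (Fin N) ℂ) (z : ℤ) :
    Matrix (Fin N) (Fin N) ℂ :=
  if 0 ≤ z then A ^ z.toNat else A⁻¹ ^ (-z).toNat

/-- `L_m = (iN/2π) ω^{m₁m₂/2} S^{m₁} T^{m₂}`, where `ω^{x/2} = exp(πix/N)`. -/
noncomputable def Lmat (N : ℕ) (m : ℤ × ℤ) : Matrix (Fin N) (Fin N) ℂ :=
  (Complex.I * N / (2 * Real.pi)) •
    (Complex.exp (Real.pi * Complex.I * ((m.1 * m.2 : ℤ) : ℂ) / N) •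
      (mzpow (clockS N) m.1 * mzpow (shiftT N) m.2))

/-- The Moyal bracket at `ℏ = 2π/N` on the free `ℂ`-vector space with basis
`{E_m : m ∈ ℤ×ℤ}`: `{E_m, E_n} = (N/π) sin((π/N)(m₁n₂ - m₂n₁)) E_{m+n}`,
extended bilinearly. -/
noncomputable def trigBracket (N : ℕ) (x y : (ℤ × ℤ) →₀ ℂ) : (ℤ × ℤ) →₀ ℂ :=
  x.sum fun m a => y.sum fun n b =>
    Finsupp.single (m + n)
      (a * b * (((N : ℂ) / (Real.pi : ℂ)) *
        Complex.sin ((Real.pi : ℂ) / N * ((m.1 * n.2 - m.2 * n.1 : ℤ) : ℂ))))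
section
variable (N : ℕ)

/-- entry formula for powers of shiftT, for k ≤ N -/
lemma shiftT_pow_apply (k : ℕ) (hk : k ≤ N) : ∀ j l : Fin N,
    ((shiftT N ^ k) j l) =
      if ((j : ℕ) + k) % N = (l : ℕ) then (if (j : ℕ) + k < N then 1 else -1) else 0 := by
  induction k with
  | zero =>
    intro j l
    simp only [pow_zero, Nat.add_zero]
    rw [Matrix.one_apply]
    have hjm : ((j:ℕ)) % N = (j:ℕ) := Nat.mod_eq_of_lt j.isLt
    by_cases h : j = l
    · subst h; simp [hjm, j.isLt]
    · have : ¬ ((j:ℕ) % N = (l:ℕ)) := by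
        rw [hjm]; exact fun h' => h (Fin.ext h')
      simp [h, this]
  | succ k ih =>
    intro j l
    have hk' : k ≤ N := Nat.le_of_succ_le hk
    rw [pow_succ, Matrix.mul_apply]
    have hNpos : 0 < N := by omega
    have hm : ((j:ℕ) + k) % N < N := Nat.mod_lt _ hNpos
    rw [Finset.sum_eq_single (⟨((j:ℕ) + k) % N, hm⟩ : Fin N)]
    · rw [ih hk']
      simp only [if_pos rfl]
      have hll := l.isLt
      have hjl := j.isLt
      rcases Nat.lt_or_ge ((j:ℕ) + k) N with h1 | h1
      · have hmod : ((j:ℕ) + k) % N = (j:ℕ) + k := Nat.mod_eq_of_lt h1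
        by_cases hc : (j:ℕ) + k + 1 < N
        · have hr : ((j:ℕ) + (k+1)) % N = (j:ℕ) + k + 1 := by
            rw [show (j:ℕ) + (k+1) = (j:ℕ) + k + 1 by omega, Nat.mod_eq_of_lt hc]
          simp only [hmod, hr, shiftT, Matrix.of_apply, if_pos h1, one_mul]
          split_ifs <;> first | (exfalso; omega) | norm_num
        · have hr : ((j:ℕ) + (k+1)) % N = 0 := by
            rw [show (j:ℕ) + (k+1) = N by omega, Nat.mod_self]
          simp only [hmod, hr, shiftT, Matrix.of_apply, if_pos h1, one_mul]
          split_ifs <;> first | (exfalso; omega) | norm_num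
      · have h2 : ((j:ℕ) + k) % N = (j:ℕ) + k - N := by
          rw [Nat.mod_eq_sub_mod h1, Nat.mod_eq_of_lt (by omega)]
        have h9 : ((j:ℕ) + (k+1)) % N = (j:ℕ) + k + 1 - N := by
          rw [show (j:ℕ) + (k+1) = (j:ℕ) + k + 1 by omega,
            Nat.mod_eq_sub_mod (by omega), Nat.mod_eq_of_lt (by omega)]
        simp only [h2, h9, shiftT, Matrix.of_apply, if_neg (show ¬ ((j:ℕ)+k < N) by omega)]
        split_ifs <;> first | (exfalso; omega) | norm_num
    · intro b _ hb
      rw [ih hk']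
      have : ¬ (((j:ℕ) + k) % N = (b:ℕ)) := by
        intro h; apply hb; exact Fin.ext (by simp [h.symm])
      simp [this]
    · intro h; exact absurd (Finset.mem_univ _) h

lemma shiftT_pow_N (hN : 1 ≤ N) : shiftT N ^ N = -1 := by
  ext j l
  rw [shiftT_pow_apply N N le_rfl]
  have h1 : ((j:ℕ) + N) % N = (j:ℕ) := by
    rw [Nat.add_mod_right, Nat.mod_eq_of_lt j.isLt]
  simp only [h1, show ¬ ((j:ℕ) + N < N) by omega, if_false]
  rw [Matrix.neg_apply, Matrix.one_apply]
  by_cases h : j = l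
  · subst h; simp
  · have : ¬ ((j:ℕ) = (l:ℕ)) := fun h' => h (Fin.ext h')
    simp [h, this]

lemma dval_pow_N (hN : 1 ≤ N) (k : Fin N) :
    (Complex.exp (Real.pi * Complex.I / N) * Complex.exp (2 * Real.pi * Complex.I / N) ^ (k : ℕ)) ^ N
      = -1 := by
  have hNne : (N : ℂ) ≠ 0 := Nat.cast_ne_zero.mpr (by omega)
  rw [mul_pow, ← pow_mul, ← Complex.exp_nat_mul, ← Complex.exp_nat_mul]
  have e1 : (N : ℂ) * (Real.pi * Complex.I / N) = Real.pi * Complex.I := by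
    field_simp
  have e2 : (((k:ℕ) * N : ℕ) : ℂ) * (2 * Real.pi * Complex.I / N) = ((k:ℕ):ℂ) * (2 * Real.pi * Complex.I) := by
    push_cast
    field_simp
  rw [e1, e2, Complex.exp_pi_mul_I]
  rw [show ((k:ℕ):ℂ) = (((k:ℕ):ℤ):ℂ) by push_cast; ring, Complex.exp_int_mul_two_pi_mul_I]
  ring

lemma clockS_pow_N (hN : 1 ≤ N) : clockS N ^ N = -1 := by
  rw [clockS, Matrix.diagonal_pow]
  have key : ((fun k : Fin N =>
      Complex.exp (Real.pi * Complex.I / N) * Complex.exp (2 * Real.pi * Complex.I / N) ^ (k : ℕ)) ^ N)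
      = fun _ => (-1 : ℂ) := by
    funext k
    simp only [Pi.pow_apply]
    exact dval_pow_N N hN k
  rw [key]
  ext j l
  rw [Matrix.diagonal_apply, Matrix.neg_apply, Matrix.one_apply]
  split_ifs <;> simp_all

end
section GroupHelpers
variable {G : Type*} [Group G]

lemma central_push (t x v : G) (hc : ∀ g, Commute v g) (h : t * x = v * (x * t)) :
    ∀ a : ℤ, t * x ^ a = v ^ a * (x ^ a * t) := by
  intro a
  have key : t * x * t⁻¹ = v * x := by
    rw [h]; group
  calc t * x ^ a = (t * x * t⁻¹) ^ a * t := by rw [conj_zpow]; group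
    _ = (v * x) ^ a * t := by rw [key]
    _ = v ^ a * (x ^ a * t) := by rw [(hc x).mul_zpow]; group

lemma central_push2 (t x v : G) (hc : ∀ g, Commute v g) (h : t * x = v * (x * t)) :
    ∀ a b : ℤ, t ^ b * x ^ a = v ^ (a * b) * (x ^ a * t ^ b) := by
  intro a b
  have h1 := central_push t x v hc h a
  have h2 : x ^ a * t = v ^ (-a) * (t * x ^ a) := by
    rw [h1]
    calc x ^ a * t = (v ^ (-a) * v ^ a) * (x ^ a * t) := by
          rw [← _root_.zpow_add]; simp
      _ = v ^ (-a) * (v ^ a * (x ^ a * t)) := by group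
  have hc' : ∀ g, Commute (v ^ (-a)) g := fun g => (hc g).zpow_left (-a)
  have h3 := central_push (x ^ a) t (v ^ (-a)) hc' h2 b
  rw [h3, ← _root_.zpow_mul, ← mul_assoc, ← _root_.zpow_add, show a*b + (-a)*b = 0 by ring,
    zpow_zero, one_mul]

end GroupHelpers

section Units
variable {N : ℕ}

/-- build a unit from `A ^ n = -1`. -/
noncomputable def unitOfPow (A : Matrix (Fin N) (Fin N) ℂ) (n : ℕ) (hn : 1 ≤ n)
    (h : A ^ n = -1) : (Matrix (Fin N) (Fin N) ℂ)ˣ where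
  val := A
  inv := -(A ^ (n - 1))
  val_inv := by
    rw [mul_neg, ← pow_succ', Nat.sub_add_cancel hn, h, neg_neg]
  inv_val := by
    rw [neg_mul, ← pow_succ, Nat.sub_add_cancel hn, h, neg_neg]

lemma mzpow_eq_unit (A : Matrix (Fin N) (Fin N) ℂ) (u : (Matrix (Fin N) (Fin N) ℂ)ˣ)
    (hu : (u : Matrix (Fin N) (Fin N) ℂ) = A) (z : ℤ) : mzpow A z = ↑(u ^ z) := by
  rw [mzpow]
  split_ifs with h
  · have : u ^ z = u ^ z.toNat := by
      rw [← zpow_natCast, Int.toNat_of_nonneg h]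
    rw [this, Units.val_pow_eq_pow_val, hu]
  · have h1 : A⁻¹ = ↑u⁻¹ := by rw [Matrix.coe_units_inv, hu]
    have h2 : u ^ z = (u⁻¹) ^ (-z).toNat := by
      rw [← zpow_natCast, Int.toNat_of_nonneg (by omega), _root_.inv_zpow, ← _root_.zpow_neg, neg_neg]
    rw [h2, Units.val_pow_eq_pow_val, h1]

end Units

section Matrices
variable (N : ℕ)

/-- scalar unit in the matrix units -/
noncomputable def scalarUnit (c : ℂ) (hc : c ≠ 0) : (Matrix (Fin N) (Fin N) ℂ)ˣ :=
  Units.map (algebraMap ℂ (Matrix (Fin N) (Fin N) ℂ)).toMonoidHom (Units.mk0 c hc)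

lemma scalarUnit_val (c : ℂ) (hc : c ≠ 0) :
    (scalarUnit N c hc : Matrix (Fin N) (Fin N) ℂ) = c • 1 := by
  simp [scalarUnit, Algebra.algebraMap_eq_smul_one]

lemma scalarUnit_zpow_val (c : ℂ) (hc : c ≠ 0) (z : ℤ) :
    ((scalarUnit N c hc ^ z : (Matrix (Fin N) (Fin N) ℂ)ˣ) : Matrix (Fin N) (Fin N) ℂ)
      = c ^ z • 1 := by
  have h1 : scalarUnit N c hc ^ z
      = Units.map (algebraMap ℂ (Matrix (Fin N) (Fin N) ℂ)).toMonoidHom ((Units.mk0 c hc) ^ z) :=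
    (map_zpow _ _ _).symm
  rw [h1]
  show (algebraMap ℂ (Matrix (Fin N) (Fin N) ℂ)) ((Units.mk0 c hc ^ z : ℂˣ) : ℂ) = _
  rw [Units.val_zpow_eq_zpow_val, Units.val_mk0, Algebra.algebraMap_eq_smul_one]

lemma scalarUnit_central (c : ℂ) (hc : c ≠ 0) (g : (Matrix (Fin N) (Fin N) ℂ)ˣ) :
    Commute (scalarUnit N c hc) g := by
  apply Units.ext
  show (scalarUnit N c hc : Matrix (Fin N) (Fin N) ℂ) * g = g * scalarUnit N c hc
  rw [scalarUnit_val]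
  rw [smul_mul_assoc, one_mul, mul_smul_comm, mul_one]

noncomputable def sUnit (hN : 1 ≤ N) : (Matrix (Fin N) (Fin N) ℂ)ˣ :=
  unitOfPow (clockS N) N hN (clockS_pow_N N hN)

noncomputable def tUnit (hN : 1 ≤ N) : (Matrix (Fin N) (Fin N) ℂ)ˣ :=
  unitOfPow (shiftT N) N hN (shiftT_pow_N N hN)

lemma sUnit_val (hN : 1 ≤ N) : (sUnit N hN : Matrix (Fin N) (Fin N) ℂ) = clockS N := rfl
lemma tUnit_val (hN : 1 ≤ N) : (tUnit N hN : Matrix (Fin N) (Fin N) ℂ) = shiftT N := rfl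

lemma omega_ne : Complex.exp (2 * Real.pi * Complex.I / N) ≠ 0 := Complex.exp_ne_zero _

lemma omega_pow_N (hN : 1 ≤ N) : Complex.exp (2 * Real.pi * Complex.I / N) ^ N = 1 := by
  rw [← Complex.exp_nat_mul]
  have hNne : (N : ℂ) ≠ 0 := Nat.cast_ne_zero.mpr (by omega)
  rw [show (N:ℂ) * (2 * Real.pi * Complex.I / N) = 2 * Real.pi * Complex.I by field_simp]
  exact Complex.exp_two_pi_mul_I

lemma TS_comm (hN : 1 ≤ N) :
    shiftT N * clockS N
      = Complex.exp (2 * Real.pi * Complex.I / N) • (clockS N * shiftT N) := by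
  ext j l
  rw [Matrix.smul_apply, clockS, Matrix.mul_diagonal, Matrix.diagonal_mul]
  set w := Complex.exp (2 * Real.pi * Complex.I / N) with hw
  set h := Complex.exp (Real.pi * Complex.I / N) with hh
  show shiftT N j l * (h * w ^ (l:ℕ)) = w * (h * w ^ (j:ℕ) * shiftT N j l)
  rw [shiftT, Matrix.of_apply]
  split_ifs with c1 c2
  · rw [← c1, pow_succ]; ring
  · obtain ⟨cj, cl⟩ := c2
    rw [cj, cl]
    have : w ^ (N - 1 : ℕ) * w = 1 := by
      rw [← pow_succ, show N - 1 + 1 = N by omega, omega_pow_N N hN]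
    calc (-1 : ℂ) * (h * w ^ (0:ℕ)) = -h := by ring
      _ = w * (h * w ^ (N-1:ℕ) * -1) := by
          rw [show w * (h * w ^ (N-1:ℕ) * -1) = -(h * (w ^ (N-1:ℕ) * w)) by ring, this, mul_one]
  · ring

lemma tUnit_sUnit (hN : 1 ≤ N) :
    tUnit N hN * sUnit N hN
      = scalarUnit N _ (omega_ne N) * (sUnit N hN * tUnit N hN) := by
  apply Units.ext
  show shiftT N * clockS N
    = (scalarUnit N _ (omega_ne N) : Matrix (Fin N) (Fin N) ℂ) * (clockS N * shiftT N)
  rw [TS_comm N hN, scalarUnit_val, smul_mul_assoc, one_mul]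

/-- the key commutation lemma at the level of integer powers -/
lemma mzpow_comm (hN : 1 ≤ N) (a b : ℤ) :
    mzpow (shiftT N) b * mzpow (clockS N) a
      = Complex.exp (2 * Real.pi * Complex.I / N) ^ (a * b) •
          (mzpow (clockS N) a * mzpow (shiftT N) b) := by
  rw [mzpow_eq_unit (clockS N) (sUnit N hN) (sUnit_val N hN), mzpow_eq_unit (shiftT N) (tUnit N hN) (tUnit_val N hN)]
  have := central_push2 (tUnit N hN) (sUnit N hN) (scalarUnit N _ (omega_ne N))
    (scalarUnit_central N _ (omega_ne N)) (tUnit_sUnit N hN) a b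
  calc (↑(tUnit N hN ^ b) : Matrix (Fin N) (Fin N) ℂ) * ↑(sUnit N hN ^ a)
      = ↑(tUnit N hN ^ b * sUnit N hN ^ a) := by rw [Units.val_mul]
    _ = ↑(scalarUnit N _ (omega_ne N) ^ (a*b) * (sUnit N hN ^ a * tUnit N hN ^ b)) := by rw [this]
    _ = _ := by
        rw [Units.val_mul, scalarUnit_zpow_val, smul_mul_assoc, one_mul, Units.val_mul]

lemma mzpow_add (A : Matrix (Fin N) (Fin N) ℂ) (u : (Matrix (Fin N) (Fin N) ℂ)ˣ)
    (hu : (u : Matrix (Fin N) (Fin N) ℂ) = A) (y z : ℤ) :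
    mzpow A (y + z) = mzpow A y * mzpow A z := by
  rw [mzpow_eq_unit A u hu, mzpow_eq_unit A u hu, mzpow_eq_unit A u hu, _root_.zpow_add,
    Units.val_mul]

end Matrices
section LmatLemmas
variable (N : ℕ)

lemma omega_zpow (k : ℤ) :
    Complex.exp (2 * Real.pi * Complex.I / N) ^ k
      = Complex.exp ((k : ℂ) * (2 * Real.pi * Complex.I / N)) :=
  (Complex.exp_int_mul _ k).symm

lemma neg_one_zpow_exp (k : ℤ) :
    Complex.exp ((k : ℂ) * (Real.pi * Complex.I)) = (-1 : ℂ) ^ k := by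
  rw [Complex.exp_int_mul, Complex.exp_pi_mul_I]

lemma STprod (hN : 1 ≤ N) (m n : ℤ × ℤ) :
    (mzpow (clockS N) m.1 * mzpow (shiftT N) m.2) *
      (mzpow (clockS N) n.1 * mzpow (shiftT N) n.2)
    = Complex.exp (2 * Real.pi * Complex.I / N) ^ (n.1 * m.2) •
        (mzpow (clockS N) (m.1 + n.1) * mzpow (shiftT N) (m.2 + n.2)) := by
  rw [mul_assoc, ← mul_assoc (mzpow (shiftT N) m.2), mzpow_comm N hN n.1 m.2,
    smul_mul_assoc, mul_smul_comm]
  congr 1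
  rw [mul_assoc (mzpow (clockS N) n.1), ← mul_assoc,
    ← mzpow_add N (clockS N) (sUnit N hN) (sUnit_val N hN),
    ← mzpow_add N (shiftT N) (tUnit N hN) (tUnit_val N hN)]

lemma Lmat_mul (hN : 1 ≤ N) (m n : ℤ × ℤ) :
    Lmat N m * Lmat N n
      = ((Complex.I * N / (2 * Real.pi)) *
          Complex.exp (Real.pi * Complex.I * ((m.2 * n.1 - m.1 * n.2 : ℤ) : ℂ) / N)) •
        Lmat N (m + n) := by
  have hNne : (N : ℂ) ≠ 0 := Nat.cast_ne_zero.mpr (by omega)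
  rw [Lmat, Lmat, Lmat]
  rw [smul_mul_smul_comm, smul_mul_smul_comm, STprod N hN m n, smul_smul, smul_smul,
    smul_smul, smul_smul]
  congr 1
  show _ * Complex.exp (2 * Real.pi * Complex.I / N) ^ (n.1 * m.2) = _
  rw [omega_zpow]
  have key : Complex.exp (Real.pi * Complex.I * ((m.1 * m.2 : ℤ) : ℂ) / N) *
        Complex.exp (Real.pi * Complex.I * ((n.1 * n.2 : ℤ) : ℂ) / N) *
        Complex.exp (((n.1 * m.2 : ℤ) : ℂ) * (2 * Real.pi * Complex.I / N))
      = Complex.exp (Real.pi * Complex.I * ((m.2 * n.1 - m.1 * n.2 : ℤ) : ℂ) / N) *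
        Complex.exp (Real.pi * Complex.I * (((m + n).1 * (m + n).2 : ℤ) : ℂ) / N) := by
    rw [← Complex.exp_add, ← Complex.exp_add, ← Complex.exp_add]
    congr 1
    have h1 : ((m + n).1 : ℤ) = m.1 + n.1 := rfl
    have h2 : ((m + n).2 : ℤ) = m.2 + n.2 := rfl
    rw [h1, h2]
    push_cast
    field_simp
    ring
  linear_combination (Complex.I * (N:ℂ) / (2 * (Real.pi:ℂ))) *
    (Complex.I * (N:ℂ) / (2 * (Real.pi:ℂ))) * key

lemma Lmat_bracket (hN : 1 ≤ N) (m n : ℤ × ℤ) :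
    Lmat N m * Lmat N n - Lmat N n * Lmat N m
      = (((N : ℂ) / (Real.pi : ℂ)) *
          Complex.sin ((Real.pi : ℂ) / N * ((m.1 * n.2 - m.2 * n.1 : ℤ) : ℂ))) •
        Lmat N (m + n) := by
  have hπ : (Real.pi : ℂ) ≠ 0 := by
    exact_mod_cast Complex.ofReal_ne_zero.mpr Real.pi_ne_zero
  have hNne : (N : ℂ) ≠ 0 := Nat.cast_ne_zero.mpr (by omega)
  rw [Lmat_mul N hN m n, Lmat_mul N hN n m, add_comm n m, ← sub_smul]
  congr 1
  rw [Complex.sin]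
  set z := (Real.pi : ℂ) / N * ((m.1 * n.2 - m.2 * n.1 : ℤ) : ℂ) with hz
  have h1 : Real.pi * Complex.I * ((m.2 * n.1 - m.1 * n.2 : ℤ) : ℂ) / N = -z * Complex.I := by
    rw [hz]; push_cast; ring
  have h2 : Real.pi * Complex.I * ((n.2 * m.1 - n.1 * m.2 : ℤ) : ℂ) / N = z * Complex.I := by
    rw [hz]; push_cast; ring
  rw [h1, h2]
  field_simp

lemma sUnit_zpow_N (hN : 1 ≤ N) :
    sUnit N hN ^ ((N : ℕ) : ℤ) = scalarUnit N (-1) (by norm_num) := by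
  apply Units.ext
  rw [zpow_natCast, Units.val_pow_eq_pow_val, sUnit_val, clockS_pow_N N hN, scalarUnit_val]
  rw [neg_smul, one_smul]

lemma tUnit_zpow_N (hN : 1 ≤ N) :
    tUnit N hN ^ ((N : ℕ) : ℤ) = scalarUnit N (-1) (by norm_num) := by
  apply Units.ext
  rw [zpow_natCast, Units.val_pow_eq_pow_val, tUnit_val, shiftT_pow_N N hN, scalarUnit_val]
  rw [neg_smul, one_smul]

lemma mzpow_shift (A : Matrix (Fin N) (Fin N) ℂ) (u : (Matrix (Fin N) (Fin N) ℂ)ˣ)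
    (hu : (u : Matrix (Fin N) (Fin N) ℂ) = A)
    (hu' : u ^ ((N : ℕ) : ℤ) = scalarUnit N (-1) (by norm_num)) (a r : ℤ) :
    mzpow A (a + (N : ℤ) * r) = (-1 : ℂ) ^ r • mzpow A a := by
  rw [mzpow_eq_unit A u hu, mzpow_eq_unit A u hu, _root_.zpow_add, _root_.zpow_mul, hu',
    Units.val_mul, scalarUnit_zpow_val, mul_smul_comm, mul_one]

lemma Lmat_shift (hN : 1 ≤ N) (μ r : ℤ × ℤ) :
    Lmat N (μ + ((N : ℤ) * r.1, (N : ℤ) * r.2))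
      = ((-1 : ℂ) ^ ((μ.1 + 1) * r.2 + (μ.2 + 1) * r.1 + (N : ℤ) * r.1 * r.2)) • Lmat N μ := by
  have hNne : (N : ℂ) ≠ 0 := Nat.cast_ne_zero.mpr (by omega)
  have hm1 : (μ + ((N : ℤ) * r.1, (N : ℤ) * r.2)).1 = μ.1 + (N : ℤ) * r.1 := rfl
  have hm2 : (μ + ((N : ℤ) * r.1, (N : ℤ) * r.2)).2 = μ.2 + (N : ℤ) * r.2 := rfl
  rw [Lmat, Lmat, hm1, hm2]
  rw [mzpow_shift N (clockS N) (sUnit N hN) (sUnit_val N hN) (sUnit_zpow_N N hN),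
    mzpow_shift N (shiftT N) (tUnit N hN) (tUnit_val N hN) (tUnit_zpow_N N hN)]
  rw [smul_mul_smul_comm]
  -- exponential factor
  have hexp : Complex.exp (Real.pi * Complex.I *
        (((μ.1 + (N:ℤ)*r.1) * (μ.2 + (N:ℤ)*r.2) : ℤ) : ℂ) / N)
      = (-1 : ℂ) ^ (μ.1 * r.2 + μ.2 * r.1 + (N:ℤ) * r.1 * r.2) *
        Complex.exp (Real.pi * Complex.I * ((μ.1 * μ.2 : ℤ) : ℂ) / N) := by
    rw [← neg_one_zpow_exp, ← Complex.exp_add]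
    congr 1
    push_cast
    field_simp
    ring
  rw [hexp]
  rw [smul_smul, smul_smul, smul_smul, smul_smul]
  congr 1
  rw [show ((-1:ℂ) ^ r.1 * (-1:ℂ) ^ r.2) = (-1:ℂ) ^ (r.1 + r.2) by
    rw [zpow_add₀ (by norm_num : (-1:ℂ) ≠ 0)]]
  rw [show ((-1:ℂ) ^ ((μ.1+1)*r.2 + (μ.2+1)*r.1 + (N:ℤ)*r.1*r.2))
      = (-1:ℂ) ^ (μ.1 * r.2 + μ.2 * r.1 + (N:ℤ) * r.1 * r.2) * (-1:ℂ) ^ (r.1 + r.2) by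
    rw [← zpow_add₀ (by norm_num : (-1:ℂ) ≠ 0)]; ring_nf]
  ring

end LmatLemmas
section TraceLemmas
variable (N : ℕ)

lemma mzpow_natCast (A : Matrix (Fin N) (Fin N) ℂ) (a : ℕ) :
    mzpow A ((a : ℕ) : ℤ) = A ^ a := by
  rw [mzpow, if_pos (by positivity), Int.toNat_natCast]

lemma clockS_diag : clockS N = Matrix.diagonal (fun k : Fin N =>
    Complex.exp (Real.pi * Complex.I / N) * Complex.exp (2 * Real.pi * Complex.I / N) ^ (k : ℕ)) :=
  rfl

lemma trace_ST (hN : 2 ≤ N) (a b : ℕ) (ha : a < N) (hb : b < N) (hab : ¬(a = 0 ∧ b = 0)) :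
    Matrix.trace (clockS N ^ a * shiftT N ^ b) = 0 := by
  have hprim := Complex.isPrimitiveRoot_exp N (by omega)
  rcases Nat.eq_zero_or_pos b with hb0 | hbpos
  · -- b = 0 : trace of S^a, geometric sum
    have ha0 : 0 < a := by omega
    subst hb0
    rw [pow_zero, mul_one, clockS_diag, Matrix.diagonal_pow, Matrix.trace_diagonal]
    have : ∀ j : Fin N, ((fun k : Fin N =>
        Complex.exp (Real.pi * Complex.I / N) * Complex.exp (2 * Real.pi * Complex.I / N) ^ (k:ℕ)) ^ a) j
        = Complex.exp (Real.pi * Complex.I / N) ^ a *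
            (Complex.exp (2 * Real.pi * Complex.I / N) ^ a) ^ (j : ℕ) := by
      intro j
      simp only [Pi.pow_apply]
      rw [mul_pow, ← pow_mul, ← pow_mul, Nat.mul_comm]
    simp only [this]
    rw [← Finset.mul_sum]
    have hsum : ∑ j : Fin N, (Complex.exp (2 * Real.pi * Complex.I / N) ^ a) ^ (j : ℕ) = 0 := by
      rw [Fin.sum_univ_eq_sum_range (fun i => (Complex.exp (2 * Real.pi * Complex.I / N) ^ a) ^ i)]
      have hx1 : Complex.exp (2 * Real.pi * Complex.I / N) ^ a ≠ 1 :=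
        hprim.pow_ne_one_of_pos_of_lt ha0.ne' ha
      have hxN : (Complex.exp (2 * Real.pi * Complex.I / N) ^ a) ^ N = 1 := by
        rw [← pow_mul, Nat.mul_comm, pow_mul, hprim.pow_eq_one, one_pow]
      rw [geom_sum_eq hx1, hxN, sub_self, zero_div]
    rw [hsum, mul_zero]
  · -- b ≠ 0 : all diagonal entries of the product vanish
    rw [Matrix.trace]
    apply Finset.sum_eq_zero
    intro j _
    rw [Matrix.diag_apply, clockS_diag, Matrix.diagonal_pow, Matrix.diagonal_mul,
      shiftT_pow_apply N b (by omega)]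
    have : ¬ (((j:ℕ) + b) % N = (j:ℕ)) := by
      intro h
      rcases Nat.lt_or_ge ((j:ℕ) + b) N with h1 | h1
      · rw [Nat.mod_eq_of_lt h1] at h; omega
      · rw [Nat.mod_eq_sub_mod h1, Nat.mod_eq_of_lt (by have := j.isLt; omega)] at h
        have := j.isLt; omega
    rw [if_neg this, mul_zero]

lemma Lmat_box (a b : ℕ) :
    Lmat N ((a : ℤ), (b : ℤ)) = ((Complex.I * N / (2 * Real.pi)) *
        Complex.exp (Real.pi * Complex.I * (((a : ℤ) * (b : ℤ) : ℤ) : ℂ) / N)) •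
      (clockS N ^ a * shiftT N ^ b) := by
  rw [Lmat]
  show (Complex.I * N / (2 * Real.pi)) •
      (Complex.exp (Real.pi * Complex.I * (((a:ℤ) * (b:ℤ) : ℤ) : ℂ) / N) •
        (mzpow (clockS N) ((a:ℕ):ℤ) * mzpow (shiftT N) ((b:ℕ):ℤ))) = _
  rw [mzpow_natCast, mzpow_natCast, smul_smul]

lemma Lmat_coeff_ne (hN : 2 ≤ N) (z : ℂ) :
    (Complex.I * N / (2 * Real.pi)) * Complex.exp z ≠ 0 := by
  have h1 : (Real.pi : ℂ) ≠ 0 := Complex.ofReal_ne_zero.mpr Real.pi_ne_zero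
  have h2 : (N : ℂ) ≠ 0 := Nat.cast_ne_zero.mpr (by omega)
  apply mul_ne_zero _ (Complex.exp_ne_zero z)
  rw [div_ne_zero_iff]
  constructor
  · exact mul_ne_zero Complex.I_ne_zero h2
  · simp [h1]

lemma int_dvd_box (n : ℤ) (hn : 0 < n) (x : ℤ) (h1 : 0 ≤ x) (h2 : x < n) (hd : n ∣ x) :
    x = 0 := by
  apply Int.eq_zero_of_dvd_of_natAbs_lt_natAbs hd
  omega

lemma trace_Lmat (hN : 2 ≤ N) (m : ℤ × ℤ)
    (hm : ¬((N : ℤ) ∣ m.1 ∧ (N : ℤ) ∣ m.2)) : Matrix.trace (Lmat N m) = 0 := by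
  have hNpos : (0 : ℤ) < (N : ℤ) := by exact_mod_cast (by omega : 0 < N)
  have hdecomp : m = (m.1 % N, m.2 % N) + ((N : ℤ) * (m.1 / N), (N : ℤ) * (m.2 / N)) := by
    refine Prod.ext_iff.mpr ⟨?_, ?_⟩
    · show m.1 = m.1 % N + (N : ℤ) * (m.1 / N)
      exact (Int.emod_add_mul_ediv m.1 N).symm
    · show m.2 = m.2 % N + (N : ℤ) * (m.2 / N)
      exact (Int.emod_add_mul_ediv m.2 N).symm
  have hshift := Lmat_shift N (by omega : 1 ≤ N) (m.1 % N, m.2 % N) (m.1 / N, m.2 / N)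
  rw [hdecomp, hshift, Matrix.trace_smul]
  have hb1 : 0 ≤ m.1 % N := Int.emod_nonneg _ (by omega)
  have hb2 : m.1 % N < N := Int.emod_lt_of_pos _ hNpos
  have hb3 : 0 ≤ m.2 % N := Int.emod_nonneg _ (by omega)
  have hb4 : m.2 % N < N := Int.emod_lt_of_pos _ hNpos
  have hnz : ¬((m.1 % N).toNat = 0 ∧ (m.2 % N).toNat = 0) := by
    rintro ⟨h1, h2⟩
    exact hm ⟨Int.dvd_of_emod_eq_zero (by omega), Int.dvd_of_emod_eq_zero (by omega)⟩
  have hbox : ((m.1 % N : ℤ), (m.2 % N : ℤ)) = (((m.1 % N).toNat : ℤ), ((m.2 % N).toNat : ℤ)) := by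
    refine Prod.ext_iff.mpr ⟨?_, ?_⟩ <;> simp <;> omega
  rw [hbox, Lmat_box, Matrix.trace_smul, trace_ST N hN _ _ (by omega) (by omega) hnz,
    smul_zero, smul_zero]

end TraceLemmas
section Spanning
variable (N : ℕ)

lemma dval_ne_zero (j : Fin N) :
    Complex.exp (Real.pi * Complex.I / N) * Complex.exp (2 * Real.pi * Complex.I / N) ^ (j : ℕ)
      ≠ 0 :=
  mul_ne_zero (Complex.exp_ne_zero _) (pow_ne_zero _ (Complex.exp_ne_zero _))

lemma std_mem (hN : 2 ≤ N) (U : Submodule ℂ (Matrix (Fin N) (Fin N) ℂ))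
    (hU : ∀ a b : ℕ, a < N → b < N → (clockS N ^ a * shiftT N ^ b) ∈ U) (j k : Fin N) :
    Matrix.single j k (1 : ℂ) ∈ U := by
  have hNpos : 0 < N := by omega
  have hprim := Complex.isPrimitiveRoot_exp N (by omega)
  set d : Fin N → ℂ := fun l =>
    Complex.exp (Real.pi * Complex.I / N) * Complex.exp (2 * Real.pi * Complex.I / N) ^ (l : ℕ)
    with hd
  set b : ℕ := ((k : ℕ) + N - (j : ℕ)) % N with hb
  have hbN : b < N := Nat.mod_lt _ hNpos
  have hjb : ((j : ℕ) + b) % N = (k : ℕ) := by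
    have hj := j.isLt
    have hk := k.isLt
    rcases le_or_gt (j : ℕ) (k : ℕ) with hle | hlt
    · have hbv : b = (k : ℕ) - (j : ℕ) := by
        rw [hb, Nat.mod_eq_sub_mod (by omega)]
        rw [show (k:ℕ) + N - (j:ℕ) - N = (k:ℕ) - (j:ℕ) by omega]
        exact Nat.mod_eq_of_lt (by omega)
      rw [hbv, show (j:ℕ) + ((k:ℕ) - (j:ℕ)) = (k:ℕ) by omega]
      exact Nat.mod_eq_of_lt hk
    · have hbv : b = (k : ℕ) + N - (j : ℕ) := by
        rw [hb]
        exact Nat.mod_eq_of_lt (by omega)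
      rw [hbv, show (j:ℕ) + ((k:ℕ) + N - (j:ℕ)) = (k:ℕ) + N by omega,
        Nat.add_mod_right]
      exact Nat.mod_eq_of_lt hk
  set ε : ℂ := if (j : ℕ) + b < N then 1 else -1 with hε
  have hkey : Matrix.single j k (1 : ℂ)
      = ∑ a ∈ Finset.range N, (ε * ((d j) ^ a)⁻¹ / N) • (clockS N ^ a * shiftT N ^ b) := by
    ext j' k'
    rw [Matrix.sum_apply]
    have hentry : ∀ a ∈ Finset.range N,
        ((ε * ((d j) ^ a)⁻¹ / N) • (clockS N ^ a * shiftT N ^ b)) j' k'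
          = (ε / N * ((d j)⁻¹ * d j') ^ a) * (shiftT N ^ b) j' k' := by
      intro a _
      rw [Matrix.smul_apply, clockS_diag, Matrix.diagonal_pow, Matrix.diagonal_mul]
      show (ε * ((d j) ^ a)⁻¹ / N) * ((d ^ a) j' * (shiftT N ^ b) j' k') = _
      rw [Pi.pow_apply, mul_pow, mul_inv]
      ring
    rw [Finset.sum_congr rfl hentry, ← Finset.sum_mul, ← Finset.mul_sum]
    have hsum : ∑ a ∈ Finset.range N, ((d j)⁻¹ * d j') ^ a
        = if j' = j then (N : ℂ) else 0 := by
      by_cases hjj : j' = j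
      · subst hjj
        rw [inv_mul_cancel₀ (dval_ne_zero N j')]
        simp
      · have hx1 : (d j)⁻¹ * d j' ≠ 1 := by
          intro hcon
          apply hjj
          have h1 : d j = d j' := (inv_mul_eq_one₀ (dval_ne_zero N j)).mp hcon
          rw [hd] at h1
          have h2 : Complex.exp (2 * Real.pi * Complex.I / N) ^ (j : ℕ)
              = Complex.exp (2 * Real.pi * Complex.I / N) ^ (j' : ℕ) :=
            mul_left_cancel₀ (Complex.exp_ne_zero _) h1
          exact (Fin.ext (hprim.pow_inj j'.isLt j.isLt h2.symm) : j' = j)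
        have hxN : ((d j)⁻¹ * d j') ^ N = 1 := by
          rw [mul_pow, inv_pow, hd]
          simp only []
          rw [dval_pow_N N (by omega) j, dval_pow_N N (by omega) j']
          norm_num
        rw [geom_sum_eq hx1, hxN, sub_self, zero_div, if_neg hjj]
    rw [hsum]
    by_cases hjj : j' = j
    · subst hjj
      rw [if_pos rfl]
      rw [shiftT_pow_apply N b (by omega)]
      have hNne : (N : ℂ) ≠ 0 := Nat.cast_ne_zero.mpr (by omega)
      by_cases hkk : k' = k
      · subst hkk
        rw [if_pos (by rw [hjb]), Matrix.single, Matrix.of_apply, if_pos ⟨rfl, rfl⟩]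
        rw [hε]
        split_ifs with hc <;> field_simp
      · rw [if_neg (by rw [hjb]; exact fun h => hkk (Fin.ext h.symm))]
        rw [Matrix.single, Matrix.of_apply,
          if_neg (by rintro ⟨_, h⟩; exact hkk h.symm), mul_zero]
    · rw [if_neg hjj, Matrix.single, Matrix.of_apply,
        if_neg (by rintro ⟨h, _⟩; exact hjj h.symm)]
      rw [mul_zero, zero_mul]
  rw [hkey]
  exact Submodule.sum_mem U fun a ha =>
    Submodule.smul_mem U _ (hU a b (Finset.mem_range.mp ha) hbN)

end Spanning

/-- The map `χ_N` with `E_{μ+Nr} ↦ (-1)^{(μ₁+1)r₂+(μ₂+1)r₁+Nr₁r₂} L_μ`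
(for `0 ≤ μ₁,μ₂ ≤ N-1`, `μ ≠ (0,0)`) and `E_{Nr} ↦ 0` extends to a linear map
that respects the brackets and maps onto `sl(N,ℂ)`. -/
theorem chiN_lie_algebra_hom_onto_sl (N : ℕ) (hN : 2 ≤ N) :
    ∃ χ : ((ℤ × ℤ) →₀ ℂ) →ₗ[ℂ] Matrix (Fin N) (Fin N) ℂ,
      (∀ μ r : ℤ × ℤ, 0 ≤ μ.1 → μ.1 < N → 0 ≤ μ.2 → μ.2 < N → μ ≠ (0, 0) →
        χ (Finsupp.single (μ + ((N : ℤ) * r.1, (N : ℤ) * r.2)) 1) =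
          ((-1 : ℂ) ^ ((μ.1 + 1) * r.2 + (μ.2 + 1) * r.1 + (N : ℤ) * r.1 * r.2)) • Lmat N μ) ∧
      (∀ r : ℤ × ℤ, χ (Finsupp.single ((N : ℤ) * r.1, (N : ℤ) * r.2) 1) = 0) ∧
      (∀ x y : (ℤ × ℤ) →₀ ℂ, χ (trigBracket N x y) = χ x * χ y - χ y * χ x) ∧
      Set.range χ = {A : Matrix (Fin N) (Fin N) ℂ | Matrix.trace A = 0} := by
  classical
  have hN1 : 1 ≤ N := by omega
  have hNZpos : (0 : ℤ) < (N : ℤ) := by exact_mod_cast (by omega : 0 < N)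
  set g : ℤ × ℤ → Matrix (Fin N) (Fin N) ℂ :=
    fun m => if ((N : ℤ) ∣ m.1 ∧ (N : ℤ) ∣ m.2) then 0 else Lmat N m with hg
  set χ : ((ℤ × ℤ) →₀ ℂ) →ₗ[ℂ] Matrix (Fin N) (Fin N) ℂ :=
    Finsupp.linearCombination ℂ g with hχ
  have hgval : ∀ m : ℤ × ℤ, χ (Finsupp.single m 1) = g m := by
    intro m
    rw [hχ, Finsupp.linearCombination_single, one_smul]
  have htriv : ∀ m : ℤ × ℤ, ((N : ℤ) ∣ m.1 ∧ (N : ℤ) ∣ m.2) → g m = 0 := by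
    intro m hm; rw [hg]; exact if_pos hm
  have hnontriv : ∀ m : ℤ × ℤ, ¬((N : ℤ) ∣ m.1 ∧ (N : ℤ) ∣ m.2) → g m = Lmat N m := by
    intro m hm; rw [hg]; exact if_neg hm
  have sin_zero : ∀ k : ℤ, (N : ℤ) ∣ k →
      Complex.sin ((Real.pi : ℂ) / N * ((k : ℤ) : ℂ)) = 0 := by
    rintro k ⟨c, rfl⟩
    have hNne : (N : ℂ) ≠ 0 := Nat.cast_ne_zero.mpr (by omega)
    have harg : (Real.pi : ℂ) / N * (((N : ℤ) * c : ℤ) : ℂ) = (c : ℂ) * Real.pi := by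
      push_cast; field_simp
    rw [harg]
    exact Complex.sin_int_mul_pi c
  have hkey : ∀ m n : ℤ × ℤ, g m * g n - g n * g m
      = (((N : ℂ) / (Real.pi : ℂ)) *
          Complex.sin ((Real.pi : ℂ) / N * ((m.1 * n.2 - m.2 * n.1 : ℤ) : ℂ))) • g (m + n) := by
    intro m n
    by_cases hm : ((N : ℤ) ∣ m.1 ∧ (N : ℤ) ∣ m.2)
    · have hdvd : (N : ℤ) ∣ m.1 * n.2 - m.2 * n.1 :=
        dvd_sub (hm.1.mul_right n.2) (hm.2.mul_right n.1)
      rw [htriv m hm, sin_zero _ hdvd]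
      simp
    · by_cases hn : ((N : ℤ) ∣ n.1 ∧ (N : ℤ) ∣ n.2)
      · have hdvd : (N : ℤ) ∣ m.1 * n.2 - m.2 * n.1 :=
          dvd_sub (hn.2.mul_left m.1) (hn.1.mul_left m.2)
        rw [htriv n hn, sin_zero _ hdvd]
        simp
      · rw [hnontriv m hm, hnontriv n hn, Lmat_bracket N hN1 m n]
        by_cases hmn : ((N : ℤ) ∣ (m + n).1 ∧ (N : ℤ) ∣ (m + n).2)
        · have hdvd : (N : ℤ) ∣ m.1 * n.2 - m.2 * n.1 := by
            have h1 : (N : ℤ) ∣ m.1 * ((m + n).2) := hmn.2.mul_left m.1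
            have h2 : (N : ℤ) ∣ m.2 * ((m + n).1) := hmn.1.mul_left m.2
            have h3 := dvd_sub h1 h2
            have heq : m.1 * ((m + n).2) - m.2 * ((m + n).1) = m.1 * n.2 - m.2 * n.1 := by
              show m.1 * (m.2 + n.2) - m.2 * (m.1 + n.1) = _
              ring
            rwa [heq] at h3
          rw [sin_zero _ hdvd, mul_zero, zero_smul, zero_smul]
        · rw [hnontriv (m + n) hmn]
  -- trace of everything in the range is zero
  have htrace_g : ∀ m : ℤ × ℤ, Matrix.trace (g m) = 0 := by
    intro m
    by_cases hm : ((N : ℤ) ∣ m.1 ∧ (N : ℤ) ∣ m.2)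
    · rw [htriv m hm, Matrix.trace_zero]
    · rw [hnontriv m hm]
      exact trace_Lmat N hN m hm
  have htrace : ∀ x : (ℤ × ℤ) →₀ ℂ, Matrix.trace (χ x) = 0 := by
    intro x
    rw [hχ, Finsupp.linearCombination_apply, Finsupp.sum, Matrix.trace_sum]
    apply Finset.sum_eq_zero
    intro m _
    rw [Matrix.trace_smul, htrace_g m, smul_zero]
  refine ⟨χ, ?_, ?_, ?_, ?_⟩
  · -- property 1
    intro μ r h1 h2 h3 h4 h5
    have hc : ¬((N : ℤ) ∣ (μ + ((N : ℤ) * r.1, (N : ℤ) * r.2)).1 ∧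
        (N : ℤ) ∣ (μ + ((N : ℤ) * r.1, (N : ℤ) * r.2)).2) := by
      rintro ⟨d1, d2⟩
      have e1 : (μ + ((N : ℤ) * r.1, (N : ℤ) * r.2)).1 = μ.1 + (N : ℤ) * r.1 := rfl
      have e2 : (μ + ((N : ℤ) * r.1, (N : ℤ) * r.2)).2 = μ.2 + (N : ℤ) * r.2 := rfl
      rw [e1] at d1; rw [e2] at d2
      have hd1 : (N : ℤ) ∣ μ.1 := by
        have := dvd_sub d1 (Dvd.intro r.1 rfl)
        simpa using this
      have hd2 : (N : ℤ) ∣ μ.2 := by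
        have := dvd_sub d2 (Dvd.intro r.2 rfl)
        simpa using this
      exact h5 (Prod.ext_iff.mpr ⟨int_dvd_box (N : ℤ) hNZpos μ.1 h1 h2 hd1,
        int_dvd_box (N : ℤ) hNZpos μ.2 h3 h4 hd2⟩)
    rw [hgval, hnontriv _ hc, Lmat_shift N hN1 μ r]
  · -- property 2
    intro r
    rw [hgval]
    exact htriv _ ⟨Dvd.intro r.1 rfl, Dvd.intro r.2 rfl⟩
  · -- property 3: bracket
    intro x y
    have hL : χ (trigBracket N x y)
        = ∑ m ∈ x.support, ∑ n ∈ y.support,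
            (x m * y n * (((N : ℂ) / (Real.pi : ℂ)) *
              Complex.sin ((Real.pi : ℂ) / N * ((m.1 * n.2 - m.2 * n.1 : ℤ) : ℂ)))) •
              g (m + n) := by
      rw [trigBracket, map_finsuppSum, Finsupp.sum]
      apply Finset.sum_congr rfl
      intro m _
      rw [map_finsuppSum, Finsupp.sum]
      apply Finset.sum_congr rfl
      intro n _
      rw [hχ, Finsupp.linearCombination_single]
    have hR : χ x * χ y - χ y * χ x
        = ∑ m ∈ x.support, ∑ n ∈ y.support,
            ((x m * y n) • (g m * g n - g n * g m)) := by
      rw [hχ, Finsupp.linearCombination_apply, Finsupp.linearCombination_apply,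
        Finsupp.sum, Finsupp.sum, Finset.sum_mul_sum, Finset.sum_mul_sum]
      rw [Finset.sum_comm (s := y.support) (t := x.support)]
      rw [← Finset.sum_sub_distrib]
      apply Finset.sum_congr rfl
      intro m _
      rw [← Finset.sum_sub_distrib]
      apply Finset.sum_congr rfl
      intro n _
      rw [smul_mul_smul_comm, smul_mul_smul_comm, mul_comm (y n) (x m), ← smul_sub]
    rw [hL, hR]
    apply Finset.sum_congr rfl
    intro m _
    apply Finset.sum_congr rfl
    intro n _
    rw [hkey m n, smul_smul]
  · -- property 4: range
    apply Set.eq_of_subset_of_subset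
    · rintro A ⟨x, rfl⟩
      exact htrace x
    · intro A hA
      have hAtr : Matrix.trace A = 0 := hA
      set U : Submodule ℂ (Matrix (Fin N) (Fin N) ℂ) :=
        LinearMap.range χ ⊔ Submodule.span ℂ {(1 : Matrix (Fin N) (Fin N) ℂ)} with hU
      have hUmem : ∀ a b : ℕ, a < N → b < N → (clockS N ^ a * shiftT N ^ b) ∈ U := by
        intro a b ha hb
        by_cases h0 : a = 0 ∧ b = 0
        · obtain ⟨rfl, rfl⟩ := h0
          rw [pow_zero, pow_zero, one_mul]
          exact Submodule.mem_sup_right (Submodule.mem_span_singleton_self 1)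
        · have hcond : ¬((N : ℤ) ∣ ((a : ℕ) : ℤ) ∧ (N : ℤ) ∣ ((b : ℕ) : ℤ)) := by
            rintro ⟨d1, d2⟩
            apply h0
            have ha' : ((a : ℕ) : ℤ) = 0 :=
              int_dvd_box (N : ℤ) hNZpos _ (by positivity) (by exact_mod_cast ha) d1
            have hb' : ((b : ℕ) : ℤ) = 0 :=
              int_dvd_box (N : ℤ) hNZpos _ (by positivity) (by exact_mod_cast hb) d2
            exact ⟨by exact_mod_cast ha', by exact_mod_cast hb'⟩
          have hval : χ (Finsupp.single (((a : ℕ) : ℤ), ((b : ℕ) : ℤ)) 1)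
              = Lmat N (((a : ℕ) : ℤ), ((b : ℕ) : ℤ)) := by
            rw [hgval, hnontriv _ hcond]
          have hLb := Lmat_box N a b
          have hne := Lmat_coeff_ne N hN
            (Real.pi * Complex.I * ((((a : ℕ) : ℤ) * ((b : ℕ) : ℤ) : ℤ) : ℂ) / N)
          have hST : clockS N ^ a * shiftT N ^ b
              = ((Complex.I * N / (2 * Real.pi)) *
                  Complex.exp (Real.pi * Complex.I *
                    ((((a : ℕ) : ℤ) * ((b : ℕ) : ℤ) : ℤ) : ℂ) / N))⁻¹ •
                χ (Finsupp.single (((a : ℕ) : ℤ), ((b : ℕ) : ℤ)) 1) := by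
            rw [hval, hLb, inv_smul_smul₀ hne]
          rw [hST]
          exact Submodule.mem_sup_left (Submodule.smul_mem _ _
            (LinearMap.mem_range.mpr ⟨_, rfl⟩))
      have htop : ∀ B : Matrix (Fin N) (Fin N) ℂ, B ∈ U := by
        intro B
        rw [Matrix.matrix_eq_sum_single B]
        apply Submodule.sum_mem
        intro i _
        apply Submodule.sum_mem
        intro j _
        have : Matrix.single i j (B i j) = (B i j) • Matrix.single i j 1 := by
          rw [Matrix.smul_single, smul_eq_mul, mul_one]
        rw [this]
        exact Submodule.smul_mem _ _ (std_mem N hN U hUmem i j)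
      obtain ⟨y, hy, z, hz, hyz⟩ := Submodule.mem_sup.mp (htop A)
      obtain ⟨c, hc⟩ := Submodule.mem_span_singleton.mp hz
      obtain ⟨x, hx⟩ := hy
      have htr : Matrix.trace A = c * N := by
        rw [← hyz, Matrix.trace_add, ← hx, htrace x, zero_add, ← hc, Matrix.trace_smul,
          Matrix.trace_one]
        simp [smul_eq_mul]
      have hc0 : c = 0 := by
        have hNne : (N : ℂ) ≠ 0 := Nat.cast_ne_zero.mpr (by omega)
        have h' : c * N = 0 := by rw [← htr, hAtr]
        rcases mul_eq_zero.mp h' with h | h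
        · exact h
        · exact absurd h hNne
      have : A = y := by rw [← hyz, ← hc, hc0, zero_smul, add_zero]
      exact ⟨x, by rw [hx, this]⟩
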